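/- For all m ≥ n ≥ 3, R(P_3, nK_2, mK_2) = 2m + n - 1, where kK_2 denotes a matching of k edges. -/
import Mathlib

open SimpleGraph
set_option linter.unusedSectionVars false
set_option maxHeartbeats 1000000

/-- `G` contains a copy of `H` (an injective graph homomorphism from `H` to `G`). -/
def Contains {V W : Type*} (G : SimpleGraph V) (H : SimpleGraph W) : Prop :=
  ∃ f : H →g G, Function.Injective f

/-- The subgraph of `K_N` formed by the edges of color `i` under the edge coloring `c`. -/
def colorClass {N k : ℕ} (c : Sym2 (Fin N) → Fin k) (i : Fin k) : SimpleGraph (Fin N) :=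
  SimpleGraph.fromRel (fun u v => c s(u, v) = i)

/-- Every 2-coloring of the edges of `K_N` yields a copy of `G₀` in color 0 or `G₁` in color 1. -/
def ramseyProp2 {V W : Type*} (N : ℕ) (G₀ : SimpleGraph V) (G₁ : SimpleGraph W) : Prop :=
  ∀ c : Sym2 (Fin N) → Fin 2,
    Contains (colorClass c 0) G₀ ∨ Contains (colorClass c 1) G₁

/-- Every 3-coloring of the edges of `K_N` yields a copy of `Gᵢ` in color `i` for some `i`. -/
def ramseyProp3 {V W X : Type*} (N : ℕ) (G₀ : SimpleGraph V) (G₁ : SimpleGraph W)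
    (G₂ : SimpleGraph X) : Prop :=
  ∀ c : Sym2 (Fin N) → Fin 3,
    Contains (colorClass c 0) G₀ ∨ Contains (colorClass c 1) G₁ ∨ Contains (colorClass c 2) G₂

/-- `k·K₂`: a matching consisting of `k` disjoint edges. -/
def matchingGraph (k : ℕ) : SimpleGraph (Fin k × Fin 2) :=
  SimpleGraph.fromRel (fun u v => u.1 = v.1)


section Aux
variable {V : Type*} [DecidableEq V]

lemma fin3cases : ∀ x : Fin 3, x = 0 ∨ x = 1 ∨ x = 2 := by decide

lemma csymm (c : Sym2 V → Fin 3) (u v : V) : c s(u, v) = c s(v, u) := by rw [Sym2.eq_swap]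

/-- a path of two color-0 edges inside `S` (center `b`). -/
def P3In (c : Sym2 V → Fin 3) (S : Finset V) : Prop :=
  ∃ a b d, a ∈ S ∧ b ∈ S ∧ d ∈ S ∧ a ≠ b ∧ b ≠ d ∧ a ≠ d ∧ c s(a, b) = 0 ∧ c s(b, d) = 0

/-- a `k`-matching of color `i` inside `S`. -/
def MatchIn (c : Sym2 V → Fin 3) (i : Fin 3) (S : Finset V) (k : ℕ) : Prop :=
  ∃ f : ℕ → V × V,
    (∀ j < k, (f j).1 ∈ S ∧ (f j).2 ∈ S ∧ (f j).1 ≠ (f j).2 ∧ c s((f j).1, (f j).2) = i) ∧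
    (∀ j < k, ∀ j' < k, j ≠ j' →
      (f j).1 ≠ (f j').1 ∧ (f j).1 ≠ (f j').2 ∧ (f j).2 ≠ (f j').1 ∧ (f j).2 ≠ (f j').2)

lemma P3In.mono {c : Sym2 V → Fin 3} {S T : Finset V} (h : P3In c S) (hST : S ⊆ T) :
    P3In c T := by
  obtain ⟨a, b, d, h1, h2, h3, h4⟩ := h
  exact ⟨a, b, d, hST h1, hST h2, hST h3, h4⟩

lemma MatchIn.mono {c : Sym2 V → Fin 3} {i : Fin 3} {S T : Finset V} {k : ℕ}
    (h : MatchIn c i S k) (hST : S ⊆ T) : MatchIn c i T k := by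
  obtain ⟨f, h1, h2⟩ := h
  exact ⟨f, fun j hj => ⟨hST (h1 j hj).1, hST (h1 j hj).2.1, (h1 j hj).2.2⟩, h2⟩

lemma matchIn_zero (c : Sym2 V → Fin 3) (i : Fin 3) (S : Finset V) (v : V) :
    MatchIn c i S 0 :=
  ⟨fun _ => (v, v), fun j hj => absurd hj (Nat.not_lt_zero j),
    fun j hj => absurd hj (Nat.not_lt_zero j)⟩

lemma matchIn_cons {c : Sym2 V → Fin 3} {i : Fin 3} {S T : Finset V} {k : ℕ} {a b : V}
    (h : MatchIn c i T k) (hTS : T ⊆ S) (haT : a ∉ T) (hbT : b ∉ T)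
    (haS : a ∈ S) (hbS : b ∈ S) (hab : a ≠ b) (hc : c s(a, b) = i) :
    MatchIn c i S (k + 1) := by
  obtain ⟨f, h1, h2⟩ := h
  refine ⟨fun j => if j = k then (a, b) else f j, ?_, ?_⟩
  · intro j hj
    by_cases hjk : j = k
    · simp only [hjk, if_pos rfl]
      exact ⟨haS, hbS, hab, hc⟩
    · simp only [if_neg hjk]
      obtain ⟨m1, m2, m3⟩ := h1 j (by omega)
      exact ⟨hTS m1, hTS m2, m3⟩
  · intro j hj j' hj' hne
    by_cases hjk : j = k <;> by_cases hjk' : j' = k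
    · exact absurd (hjk.trans hjk'.symm) hne
    · obtain ⟨m1, m2, _, _⟩ := h1 j' (by omega)
      simp only [if_pos hjk, if_neg hjk']
      refine ⟨fun he => haT (by rw [he]; exact m1), fun he => haT (by rw [he]; exact m2),
        fun he => hbT (by rw [he]; exact m1), fun he => hbT (by rw [he]; exact m2)⟩
    · obtain ⟨m1, m2, _, _⟩ := h1 j (by omega)
      simp only [if_pos hjk', if_neg hjk]
      refine ⟨fun he => haT (by rw [← he]; exact m1), fun he => hbT (by rw [← he]; exact m1),
        fun he => haT (by rw [← he]; exact m2), fun he => hbT (by rw [← he]; exact m2)⟩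
    · simp only [if_neg hjk, if_neg hjk']
      exact h2 j (by omega) j' (by omega) hne

lemma matchIn_two {c : Sym2 V → Fin 3} {i : Fin 3} {S : Finset V} {a b d e : V}
    (ha : a ∈ S) (hb : b ∈ S) (hd : d ∈ S) (he : e ∈ S)
    (hab : a ≠ b) (hde : d ≠ e) (had : a ≠ d) (hae : a ≠ e) (hbd : b ≠ d) (hbe : b ≠ e)
    (h1 : c s(a, b) = i) (h2 : c s(d, e) = i) : MatchIn c i S 2 := by
  refine ⟨fun j => if j = 0 then (a, b) else (d, e), ?_, ?_⟩
  · intro j hj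
    by_cases hj0 : j = 0
    · simp only [if_pos hj0]; exact ⟨ha, hb, hab, h1⟩
    · simp only [if_neg hj0]; exact ⟨hd, he, hde, h2⟩
  · intro j hj j' hj' hne
    have : (j = 0 ∧ j' = 1) ∨ (j = 1 ∧ j' = 0) := by omega
    rcases this with ⟨rfl, rfl⟩ | ⟨rfl, rfl⟩
    · simp only [if_pos rfl, if_neg one_ne_zero]
      exact ⟨had, hae, hbd, hbe⟩
    · simp only [if_pos rfl, if_neg one_ne_zero]
      exact ⟨had.symm, hbd.symm, hae.symm, hbe.symm⟩

lemma exists_pair {S : Finset V} (h : 2 ≤ S.card) : ∃ a ∈ S, ∃ b ∈ S, a ≠ b :=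
  Finset.one_lt_card.mp (by omega)

lemma exists_triple {S : Finset V} (h : 3 ≤ S.card) :
    ∃ a b d, a ∈ S ∧ b ∈ S ∧ d ∈ S ∧ a ≠ b ∧ a ≠ d ∧ b ≠ d := by
  have h1 : S.Nonempty := Finset.card_pos.mp (by omega)
  obtain ⟨a, ha⟩ := h1
  have h2 : 2 ≤ (S.erase a).card := by
    rw [Finset.card_erase_of_mem ha]; omega
  obtain ⟨b, hb, d, hd, hbd⟩ := exists_pair h2
  obtain ⟨hba, hbS⟩ := Finset.mem_erase.mp hb
  obtain ⟨hda, hdS⟩ := Finset.mem_erase.mp hd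
  exact ⟨a, b, d, ha, hbS, hdS, hba.symm, hda.symm, hbd⟩

-- new material
lemma B1 (c : Sym2 V → Fin 3) (i : Fin 3) :
    ∀ k (S : Finset V), ¬ P3In c S →
      (∀ u ∈ S, ∀ v ∈ S, u ≠ v → c s(u, v) = 0 ∨ c s(u, v) = i) →
      2 * k + 1 ≤ S.card → MatchIn c i S k := by
  intro k
  induction k with
  | zero =>
    intro S _ _ hcard
    have hpos : 0 < S.card := by omega
    obtain ⟨v, hv⟩ := Finset.card_pos.mp hpos
    exact matchIn_zero c i S v
  | succ k IH =>
    intro S hP hcol hcard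
    obtain ⟨a, b, d, ha, hb, hd, hab, had, hbd⟩ := exists_triple (S := S) (by omega)
    have hedge : ∃ u v, u ∈ S ∧ v ∈ S ∧ u ≠ v ∧ c s(u, v) = i := by
      rcases hcol a ha b hb hab with h1 | h1
      · rcases hcol a ha d hd had with h2 | h2
        · exact absurd ⟨b, a, d, hb, ha, hd, hab.symm, had, hbd, by rw [csymm c b a]; exact h1, h2⟩ hP
        · exact ⟨a, d, ha, hd, had, h2⟩
      · exact ⟨a, b, ha, hb, hab, h1⟩
    obtain ⟨u, v, hu, hv, huv, hcuv⟩ := hedge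
    set T := (S.erase u).erase v with hT
    have hvT : v ∈ S.erase u := Finset.mem_erase.mpr ⟨huv.symm, hv⟩
    have hTcard : T.card = S.card - 2 := by
      rw [hT, Finset.card_erase_of_mem hvT, Finset.card_erase_of_mem hu]
      omega
    have hTS : T ⊆ S := (Finset.erase_subset _ _).trans (Finset.erase_subset _ _)
    have hMT : MatchIn c i T k := by
      refine IH T (fun hp => hP (hp.mono hTS)) (fun x hx y hy hxy => hcol x (hTS hx) y (hTS hy) hxy) ?_
      omega
    refine matchIn_cons hMT hTS ?_ ?_ hu hv huv hcuv
    · intro hmem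
      exact (Finset.mem_erase.mp ((Finset.erase_subset _ _) hmem)).1 rfl
    · intro hmem
      exact (Finset.mem_erase.mp hmem).1 rfl

/-- Core of case A: five vertices x y z w u, xy color 1, zw color 2, ux color 1, uz color 2. -/
lemma caseA_core (c : Sym2 V → Fin 3) (S : Finset V) (x y z w u : V)
    (hxS : x ∈ S) (hyS : y ∈ S) (hzS : z ∈ S) (hwS : w ∈ S) (huS : u ∈ S)
    (hxy : x ≠ y) (hxz : x ≠ z) (hxw : x ≠ w) (hxu : x ≠ u)
    (hyz : y ≠ z) (hyw : y ≠ w) (hyu : y ≠ u)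
    (hzw : z ≠ w) (hzu : z ≠ u) (hwu : w ≠ u)
    (h1 : c s(x, y) = 1) (h2 : c s(z, w) = 2) (h3 : c s(u, x) = 1) (h4 : c s(u, z) = 2) :
    P3In c S ∨ MatchIn c 1 S 2 ∨ MatchIn c 2 S 2 := by
  rcases fin3cases (c s(y, w)) with hyw0 | hyw1 | hyw2
  · -- y w color 0
    rcases fin3cases (c s(x, w)) with hxw0 | hxw1 | hxw2
    · -- x w color 0 : P3 center w : y-w, w-x
      exact Or.inl ⟨y, w, x, hyS, hwS, hxS, hyw, hxw.symm, hxy.symm, hyw0,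
        by rw [csymm c w x]; exact hxw0⟩
    · -- x w color 1 : continue with y z
      rcases fin3cases (c s(y, z)) with hyz0 | hyz1 | hyz2
      · -- y z color 0 : P3 center y : w-y, y-z
        exact Or.inl ⟨w, y, z, hwS, hyS, hzS, hyw.symm, hyz, hzw.symm, by rw [csymm c w y]; exact hyw0, hyz0⟩
      · -- y z color 1 : pair (u,x) (y,z)
        exact Or.inr (Or.inl (matchIn_two huS hxS hyS hzS hxu.symm hyz hyu.symm hzu.symm
          hxy hxz h3 hyz1))
      · -- y z color 2 : continue with u y
        rcases fin3cases (c s(u, y)) with huy0 | huy1 | huy2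
        · -- u y color 0 : continue with u w
          rcases fin3cases (c s(u, w)) with huw0 | huw1 | huw2
          · -- P3 center u : y-u, u-w
            exact Or.inl ⟨y, u, w, hyS, huS, hwS, hyu, hwu.symm, hyw,
              by rw [csymm c y u]; exact huy0, huw0⟩
          · -- pair (u,w) (x,y) color 1
            exact Or.inr (Or.inl (matchIn_two huS hwS hxS hyS hwu.symm hxy hxu.symm hyu.symm
              hxw.symm hyw.symm huw1 h1))
          · -- pair (u,w) (y,z) color 2
            exact Or.inr (Or.inr (matchIn_two huS hwS hyS hzS hwu.symm hyz hyu.symm hzu.symm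
              hyw.symm hzw.symm huw2 hyz2))
        · -- u y color 1 : pair (u,y) (x,w)
          exact Or.inr (Or.inl (matchIn_two huS hyS hxS hwS hyu.symm hxw hxu.symm hwu.symm
            hxy.symm hyw huy1 hxw1))
        · -- u y color 2 : pair (u,y) (z,w)
          exact Or.inr (Or.inr (matchIn_two huS hyS hzS hwS hyu.symm hzw hzu.symm hwu.symm
            hyz hyw huy2 h2))
    · -- x w color 2 : pair (u,z) (x,w)
      exact Or.inr (Or.inr (matchIn_two huS hzS hxS hwS hzu.symm hxw hxu.symm hwu.symm
        hxz.symm hzw h4 hxw2))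
  · -- y w color 1 : pair (u,x) (y,w)
    exact Or.inr (Or.inl (matchIn_two huS hxS hyS hwS hxu.symm hyw hyu.symm hwu.symm
      hxy hxw h3 hyw1))
  · -- y w color 2 : pair (u,z) (y,w)
    exact Or.inr (Or.inr (matchIn_two huS hzS hyS hwS hzu.symm hyw hyu.symm hwu.symm
      hyz.symm hzw h4 hyw2))

lemma caseB_core (c : Sym2 V → Fin 3) (S : Finset V) (x y z u w : V)
    (hxS : x ∈ S) (hyS : y ∈ S) (hzS : z ∈ S) (huS : u ∈ S) (hwS : w ∈ S)
    (hxy : x ≠ y) (hxz : x ≠ z) (hxu : x ≠ u) (hxw : x ≠ w)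
    (hyz : y ≠ z) (hyu : y ≠ u) (hyw : y ≠ w)
    (hzu : z ≠ u) (hzw : z ≠ w) (huw : u ≠ w)
    (h1 : c s(x, y) = 1) (h2 : c s(y, z) = 2) :
    P3In c S ∨ MatchIn c 1 S 2 ∨ MatchIn c 2 S 2 := by
  rcases fin3cases (c s(u, w)) with huw0 | huw1 | huw2
  · rcases fin3cases (c s(u, x)) with hux0 | hux1 | hux2
    · -- P3 center u : w-u, u-x
      exact Or.inl ⟨w, u, x, hwS, huS, hxS, huw.symm, hxu.symm, hxw.symm,
        by rw [csymm c w u]; exact huw0, hux0⟩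
    · rcases fin3cases (c s(w, x)) with hwx0 | hwx1 | hwx2
      · -- P3 center w : u-w, w-x
        exact Or.inl ⟨u, w, x, huS, hwS, hxS, huw, hxw.symm, hxu.symm, huw0, hwx0⟩
      · rcases fin3cases (c s(u, z)) with huz0 | huz1 | huz2
        · -- P3 center u : w-u, u-z
          exact Or.inl ⟨w, u, z, hwS, huS, hzS, huw.symm, hzu.symm, hzw.symm,
            by rw [csymm c w u]; exact huw0, huz0⟩
        · -- pair (x,y) (u,z)
          exact Or.inr (Or.inl (matchIn_two hxS hyS huS hzS hxy hzu.symm hxu hxz hyu hyz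
            h1 huz1))
        · rcases fin3cases (c s(w, y)) with hwy0 | hwy1 | hwy2
          · -- P3 center w : u-w, w-y
            exact Or.inl ⟨u, w, y, huS, hwS, hyS, huw, hyw.symm, hyu.symm, huw0, hwy0⟩
          · -- pair (u,x) (w,y) color 1
            exact Or.inr (Or.inl (matchIn_two huS hxS hwS hyS hxu.symm hyw.symm huw hyu.symm
              hxw hxy hux1 hwy1))
          · -- pair (u,z) (w,y) color 2
            exact Or.inr (Or.inr (matchIn_two huS hzS hwS hyS hzu.symm hyw.symm huw hyu.symm
              hzw hyz.symm huz2 hwy2))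
      · -- pair (y,z) (w,x) color 2
        exact Or.inr (Or.inr (matchIn_two hyS hzS hwS hxS hyz hxw.symm hyw hxy.symm hzw
          hxz.symm h2 hwx2))
    · -- pair (y,z) (u,x) color 2
      exact Or.inr (Or.inr (matchIn_two hyS hzS huS hxS hyz hxu.symm hyu hxy.symm hzu hxz.symm
        h2 hux2))
  · -- pair (x,y) (u,w) color 1
    exact Or.inr (Or.inl (matchIn_two hxS hyS huS hwS hxy huw hxu hxw hyu hyw h1 huw1))
  · -- pair (y,z) (u,w) color 2
    exact Or.inr (Or.inr (matchIn_two hyS hzS huS hwS hyz huw hyu hyw hzu hzw h2 huw2))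

lemma caseA_mid (c : Sym2 V → Fin 3) (S : Finset V) (x y z w u : V)
    (hxS : x ∈ S) (hyS : y ∈ S) (hzS : z ∈ S) (hwS : w ∈ S) (huS : u ∈ S)
    (hxy : x ≠ y) (hxz : x ≠ z) (hxw : x ≠ w) (hxu : x ≠ u)
    (hyz : y ≠ z) (hyw : y ≠ w) (hyu : y ≠ u)
    (hzw : z ≠ w) (hzu : z ≠ u) (hwu : w ≠ u)
    (h1 : c s(x, y) = 1) (h2 : c s(z, w) = 2) (h3 : c s(u, x) = 1) :
    P3In c S ∨ MatchIn c 1 S 2 ∨ MatchIn c 2 S 2 := by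
  rcases fin3cases (c s(u, z)) with huz0 | huz1 | huz2
  · rcases fin3cases (c s(u, w)) with huw0 | huw1 | huw2
    · -- P3 center u : z-u, u-w
      exact Or.inl ⟨z, u, w, hzS, huS, hwS, hzu, hwu.symm, hzw,
        by rw [csymm c z u]; exact huz0, huw0⟩
    · -- pair (u,w) (x,y) color 1
      exact Or.inr (Or.inl (matchIn_two huS hwS hxS hyS hwu.symm hxy hxu.symm hyu.symm
        hxw.symm hyw.symm huw1 h1))
    · -- caseA_core with z and w swapped
      exact caseA_core c S x y w z u hxS hyS hwS hzS huS hxy hxw hxz hxu hyw hyz hyu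
        hzw.symm hwu hzu h1 (by rw [csymm c w z]; exact h2) h3 huw2
  · -- pair (u,z) (x,y) color 1
    exact Or.inr (Or.inl (matchIn_two huS hzS hxS hyS hzu.symm hxy hxu.symm hyu.symm
      hxz.symm hyz.symm huz1 h1))
  · exact caseA_core c S x y z w u hxS hyS hzS hwS huS hxy hxz hxw hxu hyz hyw hyu
      hzw hzu hwu h1 h2 h3 huz2

lemma caseA_outer (c : Sym2 V → Fin 3) (S : Finset V) (x y z w : V)
    (hxS : x ∈ S) (hyS : y ∈ S) (hzS : z ∈ S) (hwS : w ∈ S)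
    (hxy : x ≠ y) (hxz : x ≠ z) (hxw : x ≠ w)
    (hyz : y ≠ z) (hyw : y ≠ w) (hzw : z ≠ w)
    (h1 : c s(x, y) = 1) (h2 : c s(z, w) = 2) (hcard : 5 ≤ S.card) :
    P3In c S ∨ MatchIn c 1 S 2 ∨ MatchIn c 2 S 2 := by
  -- find a fifth vertex u
  have hu : ∃ u, u ∈ S ∧ u ≠ x ∧ u ≠ y ∧ u ≠ z ∧ u ≠ w := by
    set T := (((S.erase x).erase y).erase z).erase w with hT
    have h1' : y ∈ S.erase x := Finset.mem_erase.mpr ⟨hxy.symm, hyS⟩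
    have h2' : z ∈ (S.erase x).erase y :=
      Finset.mem_erase.mpr ⟨hyz.symm, Finset.mem_erase.mpr ⟨hxz.symm, hzS⟩⟩
    have h3' : w ∈ ((S.erase x).erase y).erase z :=
      Finset.mem_erase.mpr ⟨hzw.symm, Finset.mem_erase.mpr ⟨hyw.symm,
        Finset.mem_erase.mpr ⟨hxw.symm, hwS⟩⟩⟩
    have hTcard : 0 < T.card := by
      rw [hT, Finset.card_erase_of_mem h3', Finset.card_erase_of_mem h2',
        Finset.card_erase_of_mem h1', Finset.card_erase_of_mem hxS]
      omega
    obtain ⟨u, hu⟩ := Finset.card_pos.mp hTcard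
    rw [hT] at hu
    have m4 := Finset.mem_erase.mp hu
    have m3 := Finset.mem_erase.mp m4.2
    have m2 := Finset.mem_erase.mp m3.2
    have m1 := Finset.mem_erase.mp m2.2
    exact ⟨u, m1.2, m1.1, m2.1, m3.1, m4.1⟩
  obtain ⟨u, huS, hux, huy, huz, huw⟩ := hu
  rcases fin3cases (c s(u, x)) with hx0 | hx1 | hx2
  · rcases fin3cases (c s(u, y)) with hy0 | hy1 | hy2
    · -- P3 center u : x-u, u-y
      exact Or.inl ⟨x, u, y, hxS, huS, hyS, hux.symm, huy, hxy,
        by rw [csymm c x u]; exact hx0, hy0⟩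
    · -- u-y color 1 : caseA_mid with x,y swapped
      exact caseA_mid c S y x z w u hyS hxS hzS hwS huS hxy.symm hyz hyw huy.symm
        hxz hxw hux.symm hzw huz.symm huw.symm (by rw [csymm c y x]; exact h1) h2 hy1
    · -- pair (u,y) (z,w) color 2
      exact Or.inr (Or.inr (matchIn_two huS hyS hzS hwS huy hzw huz huw hyz hyw hy2 h2))
  · exact caseA_mid c S x y z w u hxS hyS hzS hwS huS hxy hxz hxw hux.symm
      hyz hyw huy.symm hzw huz.symm huw.symm h1 h2 hx1
  · -- pair (u,x) (z,w) color 2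
    exact Or.inr (Or.inr (matchIn_two huS hxS hzS hwS hux hzw huz huw hxz hxw hx2 h2))

lemma caseB_outer (c : Sym2 V → Fin 3) (S : Finset V) (p q r : V)
    (hpS : p ∈ S) (hqS : q ∈ S) (hrS : r ∈ S)
    (hpq : p ≠ q) (hpr : p ≠ r) (hqr : q ≠ r)
    (h1 : c s(p, q) = 1) (h2 : c s(q, r) = 2) (hcard : 5 ≤ S.card) :
    P3In c S ∨ MatchIn c 1 S 2 ∨ MatchIn c 2 S 2 := by
  have hu : ∃ u w, u ∈ S ∧ w ∈ S ∧ u ≠ w ∧ u ≠ p ∧ u ≠ q ∧ u ≠ r ∧ w ≠ p ∧ w ≠ q ∧ w ≠ r := by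
    set T := ((S.erase p).erase q).erase r with hT
    have h1' : q ∈ S.erase p := Finset.mem_erase.mpr ⟨hpq.symm, hqS⟩
    have h2' : r ∈ (S.erase p).erase q :=
      Finset.mem_erase.mpr ⟨hqr.symm, Finset.mem_erase.mpr ⟨hpr.symm, hrS⟩⟩
    have hTcard : 2 ≤ T.card := by
      rw [hT, Finset.card_erase_of_mem h2', Finset.card_erase_of_mem h1',
        Finset.card_erase_of_mem hpS]
      omega
    obtain ⟨u, hu, w, hw, huw⟩ := exists_pair hTcard
    rw [hT] at hu hw
    have mu3 := Finset.mem_erase.mp hu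
    have mu2 := Finset.mem_erase.mp mu3.2
    have mu1 := Finset.mem_erase.mp mu2.2
    have mw3 := Finset.mem_erase.mp hw
    have mw2 := Finset.mem_erase.mp mw3.2
    have mw1 := Finset.mem_erase.mp mw2.2
    exact ⟨u, w, mu1.2, mw1.2, huw, mu1.1, mu2.1, mu3.1, mw1.1, mw2.1, mw3.1⟩
  obtain ⟨u, w, huS, hwS, huw, hup, huq, hur, hwp, hwq, hwr⟩ := hu
  exact caseB_core c S p q r u w hpS hqS hrS huS hwS hpq hpr hup.symm hwp.symm
    hqr huq.symm hwq.symm hur.symm hwr.symm huw h1 h2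

lemma T22 (c : Sym2 V → Fin 3) (S : Finset V) (hcard : 5 ≤ S.card) :
    P3In c S ∨ MatchIn c 1 S 2 ∨ MatchIn c 2 S 2 := by
  by_cases hP : P3In c S
  · exact Or.inl hP
  by_cases E1 : ∃ x ∈ S, ∃ y ∈ S, x ≠ y ∧ c s(x, y) = 1
  · by_cases E2 : ∃ z ∈ S, ∃ w ∈ S, z ≠ w ∧ c s(z, w) = 2
    · obtain ⟨x, hxS, y, hyS, hxy, h1⟩ := E1
      obtain ⟨z, hzS, w, hwS, hzw, h2⟩ := E2
      by_cases hxz : x = z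
      · subst hxz
        have hyw : y ≠ w := by
          rintro rfl
          exact absurd (h1.symm.trans h2) (by decide)
        exact caseB_outer c S y x w hyS hxS hwS hxy.symm hyw hzw
          (by rw [csymm c y x]; exact h1) h2 hcard
      by_cases hxw : x = w
      · subst hxw
        have hyz : y ≠ z := by
          intro h
          rw [csymm c z x, ← h] at h2
          exact absurd (h1.symm.trans h2) (by decide)
        exact caseB_outer c S y x z hyS hxS hzS hxy.symm hyz hxz
          (by rw [csymm c y x]; exact h1) (by rw [csymm c x z]; exact h2) hcard
      by_cases hyz : y = z
      · subst hyz
        have hxw' : x ≠ w := hxw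
        exact caseB_outer c S x y w hxS hyS hwS hxy hxw' hzw h1 h2 hcard
      by_cases hyw : y = w
      · subst hyw
        exact caseB_outer c S x y z hxS hyS hzS hxy hxz (fun h => hzw h.symm) h1
          (by rw [csymm c y z]; exact h2) hcard
      · exact caseA_outer c S x y z w hxS hyS hzS hwS hxy hxz hxw hyz hyw hzw h1 h2 hcard
    · push_neg at E2
      refine Or.inr (Or.inl (B1 c 1 2 S hP ?_ (by omega)))
      intro a ha b hb hab
      rcases fin3cases (c s(a, b)) with h | h | h
      · exact Or.inl h
      · exact Or.inr h
      · exact absurd h (E2 a ha b hb hab)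
  · push_neg at E1
    refine Or.inr (Or.inr (B1 c 2 2 S hP ?_ (by omega)))
    intro a ha b hb hab
    rcases fin3cases (c s(a, b)) with h | h | h
    · exact Or.inl h
    · exact absurd h (E1 a ha b hb hab)
    · exact Or.inr h

lemma key (c : Sym2 V → Fin 3) (m : ℕ) :
    ∀ n (S : Finset V), 2 ≤ n → n ≤ m → 2 * m + n - 1 ≤ S.card →
      P3In c S ∨ MatchIn c 1 S n ∨ MatchIn c 2 S m := by
  induction m using Nat.strong_induction_on with
  | _ m IH =>
  intro n S hn hnm hcard
  by_cases hP : P3In c S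
  · exact Or.inl hP
  rcases Nat.lt_or_ge n m with hlt | hge
  · -- n < m : reduce m
    by_cases E2 : ∃ z ∈ S, ∃ w ∈ S, z ≠ w ∧ c s(z, w) = 2
    · obtain ⟨z, hzS, w, hwS, hzw, h2⟩ := E2
      set T := (S.erase z).erase w with hT
      have hwT : w ∈ S.erase z := Finset.mem_erase.mpr ⟨hzw.symm, hwS⟩
      have hTcard : T.card = S.card - 2 := by
        rw [hT, Finset.card_erase_of_mem hwT, Finset.card_erase_of_mem hzS]
        omega
      have hTS : T ⊆ S := (Finset.erase_subset _ _).trans (Finset.erase_subset _ _)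
      have hrec := IH (m - 1) (by omega) n T hn (by omega) (by omega)
      rcases hrec with hp | hm1 | hm2
      · exact Or.inl (hp.mono hTS)
      · exact Or.inr (Or.inl (hm1.mono hTS))
      · refine Or.inr (Or.inr ?_)
        have hzT : z ∉ T := by
          intro hmem
          exact (Finset.mem_erase.mp ((Finset.erase_subset _ _) hmem)).1 rfl
        have hwT' : w ∉ T := fun hmem => (Finset.mem_erase.mp hmem).1 rfl
        have := matchIn_cons hm2 hTS hzT hwT' hzS hwS hzw h2
        have hm : m - 1 + 1 = m := by omega
        rwa [hm] at this
    · push_neg at E2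
      refine Or.inr (Or.inl (B1 c 1 n S hP ?_ (by omega)))
      intro a ha b hb hab
      rcases fin3cases (c s(a, b)) with h | h | h
      · exact Or.inl h
      · exact Or.inr h
      · exact absurd h (E2 a ha b hb hab)
  · -- n = m
    have hnm' : n = m := le_antisymm hnm hge
    subst hnm'
    rcases Nat.lt_or_ge 2 n with h2n | h2n
    · -- n ≥ 3 : cherry argument
      by_cases EC : ∃ p ∈ S, ∃ q ∈ S, ∃ r ∈ S,
          p ≠ q ∧ q ≠ r ∧ p ≠ r ∧ c s(p, q) = 1 ∧ c s(q, r) = 2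
      · obtain ⟨p, hpS, q, hqS, r, hrS, hpq, hqr, hpr, h1, h2⟩ := EC
        set T := ((S.erase p).erase q).erase r with hT
        have h1' : q ∈ S.erase p := Finset.mem_erase.mpr ⟨hpq.symm, hqS⟩
        have h2' : r ∈ (S.erase p).erase q :=
          Finset.mem_erase.mpr ⟨hqr.symm, Finset.mem_erase.mpr ⟨hpr.symm, hrS⟩⟩
        have hTcard : T.card = S.card - 3 := by
          rw [hT, Finset.card_erase_of_mem h2', Finset.card_erase_of_mem h1',
            Finset.card_erase_of_mem hpS]
          omega
        have hTS : T ⊆ S :=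
          ((Finset.erase_subset _ _).trans (Finset.erase_subset _ _)).trans
            (Finset.erase_subset _ _)
        have hrec := IH (n - 1) (by omega) (n - 1) T (by omega) le_rfl (by omega)
        have hpT : p ∉ T := by
          intro hmem
          have := (Finset.erase_subset _ _) ((Finset.erase_subset _ _) hmem)
          exact (Finset.mem_erase.mp this).1 rfl
        have hqT : q ∉ T := by
          intro hmem
          have := (Finset.erase_subset _ _) hmem
          exact (Finset.mem_erase.mp this).1 rfl
        have hrT : r ∉ T := fun hmem => (Finset.mem_erase.mp hmem).1 rfl
        have hn1 : n - 1 + 1 = n := by omega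
        rcases hrec with hp' | hm1 | hm2
        · exact Or.inl (hp'.mono hTS)
        · refine Or.inr (Or.inl ?_)
          have := matchIn_cons hm1 hTS hpT hqT hpS hqS hpq h1
          rwa [hn1] at this
        · refine Or.inr (Or.inr ?_)
          have := matchIn_cons hm2 hTS hqT hrT hqS hrS hqr h2
          rwa [hn1] at this
      · -- no cherry : show one color class is missing
        by_cases E1 : ∃ x ∈ S, ∃ y ∈ S, x ≠ y ∧ c s(x, y) = 1
        · by_cases E2 : ∃ z ∈ S, ∃ w ∈ S, z ≠ w ∧ c s(z, w) = 2
          · exfalso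
            obtain ⟨x, hxS, y, hyS, hxy, h1⟩ := E1
            obtain ⟨z, hzS, w, hwS, hzw, h2⟩ := E2
            -- overlap cases give a cherry directly
            by_cases hxz : x = z
            · subst hxz
              have hyw : y ≠ w := by
                rintro rfl
                exact absurd (h1.symm.trans h2) (by decide)
              exact EC ⟨y, hyS, x, hxS, w, hwS, hxy.symm, hzw, hyw,
                by rw [csymm c y x]; exact h1, h2⟩
            by_cases hxw : x = w
            · subst hxw
              have hyz : y ≠ z := by
                intro h
                rw [csymm c z x, ← h] at h2
                exact absurd (h1.symm.trans h2) (by decide)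
              exact EC ⟨y, hyS, x, hxS, z, hzS, hxy.symm, hxz, hyz,
                by rw [csymm c y x]; exact h1, by rw [csymm c x z]; exact h2⟩
            by_cases hyz : y = z
            · subst hyz
              have hxw' : x ≠ w := hxw
              exact EC ⟨x, hxS, y, hyS, w, hwS, hxy, hzw, hxw', h1, h2⟩
            by_cases hyw : y = w
            · subst hyw
              exact EC ⟨x, hxS, y, hyS, z, hzS, hxy, fun h => hzw h.symm, hxz, h1,
                by rw [csymm c y z]; exact h2⟩
            -- all distinct : find a cherry through x
            rcases fin3cases (c s(x, z)) with hxz0 | hxz1 | hxz2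
            · rcases fin3cases (c s(x, w)) with hxw0 | hxw1 | hxw2
              · -- P3 center x : z-x, x-w
                exact hP ⟨z, x, w, hzS, hxS, hwS, fun h => hxz h.symm, hxw, hzw,
                  by rw [csymm c z x]; exact hxz0, hxw0⟩
              · -- cherry x-w color1, w-z color2
                exact EC ⟨x, hxS, w, hwS, z, hzS, hxw, fun h => hzw h.symm, hxz, hxw1,
                  by rw [csymm c w z]; exact h2⟩
              · -- cherry y-x color1, x-w color2
                exact EC ⟨y, hyS, x, hxS, w, hwS, hxy.symm, hxw, hyw,
                  by rw [csymm c y x]; exact h1, hxw2⟩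
            · -- cherry x-z color1, z-w color2
              exact EC ⟨x, hxS, z, hzS, w, hwS, hxz, hzw, hxw, hxz1, h2⟩
            · -- cherry y-x color1, x-z color2
              exact EC ⟨y, hyS, x, hxS, z, hzS, hxy.symm, hxz, hyz,
                by rw [csymm c y x]; exact h1, hxz2⟩
          · push_neg at E2
            refine Or.inr (Or.inl (B1 c 1 n S hP ?_ (by omega)))
            intro a ha b hb hab
            rcases fin3cases (c s(a, b)) with h | h | h
            · exact Or.inl h
            · exact Or.inr h
            · exact absurd h (E2 a ha b hb hab)
        · push_neg at E1
          refine Or.inr (Or.inr (B1 c 2 n S hP ?_ (by omega)))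
          intro a ha b hb hab
          rcases fin3cases (c s(a, b)) with h | h | h
          · exact Or.inl h
          · exact absurd h (E1 a ha b hb hab)
          · exact Or.inr h
    · -- n = 2
      have hn2 : n = 2 := by omega
      subst hn2
      exact T22 c S (by omega)
  -- leftover? none


end Aux

lemma colorClass_adj {N : ℕ} (c : Sym2 (Fin N) → Fin 3) (i : Fin 3) (u v : Fin N)
    (hne : u ≠ v) (hc : c s(u, v) = i) : (colorClass c i).Adj u v := by
  rw [colorClass, SimpleGraph.fromRel_adj]
  exact ⟨hne, Or.inl hc⟩

lemma p3in_contains {N : ℕ} {c : Sym2 (Fin N) → Fin 3} {S : Finset (Fin N)}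
    (h : P3In c S) : Contains (colorClass c 0) (pathGraph 3) := by
  obtain ⟨a, b, d, _, _, _, hab, hbd, had, h1, h2⟩ := h
  have adj1 : (colorClass c 0).Adj a b := colorClass_adj c 0 a b hab h1
  have adj2 : (colorClass c 0).Adj b d := colorClass_adj c 0 b d hbd h2
  have adj1' := adj1.symm
  have adj2' := adj2.symm
  have hinj : Function.Injective (![a, b, d] : Fin 3 → Fin N) := by
    have hba := hab.symm
    have hdb := hbd.symm
    have hda := had.symm
    intro u v huv
    fin_cases u <;> fin_cases v <;> simp_all
  refine ⟨⟨![a, b, d], ?_⟩, hinj⟩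
  intro u v huv
  rw [pathGraph_adj] at huv
  fin_cases u <;> fin_cases v <;> simp_all

lemma matchIn_contains {N : ℕ} {c : Sym2 (Fin N) → Fin 3} {i : Fin 3} {S : Finset (Fin N)}
    {k : ℕ} (h : MatchIn c i S k) : Contains (colorClass c i) (matchingGraph k) := by
  obtain ⟨f, h1, h2⟩ := h
  have fin2 : ∀ a : Fin 2, a = 0 ∨ a = 1 := by decide
  have hinj : Function.Injective
      (fun p : Fin k × Fin 2 => if p.2 = 0 then (f p.1.val).1 else (f p.1.val).2) := by
    rintro ⟨j, a⟩ ⟨j', a'⟩ hEq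
    simp only at hEq
    by_cases hjj : j.val = j'.val
    · have hj : j = j' := Fin.ext hjj
      subst hj
      have hne := (h1 j.val j.isLt).2.2.1
      rcases fin2 a with rfl | rfl <;> rcases fin2 a' with rfl | rfl
      · rfl
      · simp only [if_pos rfl, if_neg one_ne_zero] at hEq
        exact absurd hEq hne
      · simp only [if_pos rfl, if_neg one_ne_zero] at hEq
        exact absurd hEq.symm hne
      · rfl
    · exfalso
      have hd := h2 j.val j.isLt j'.val j'.isLt hjj
      rcases fin2 a with rfl | rfl <;> rcases fin2 a' with rfl | rfl <;>
        simp only [if_pos rfl, if_neg one_ne_zero] at hEq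
      · exact hd.1 hEq
      · exact hd.2.1 hEq
      · exact hd.2.2.1 hEq
      · exact hd.2.2.2 hEq
  refine ⟨⟨fun p => if p.2 = 0 then (f p.1.val).1 else (f p.1.val).2, ?_⟩, hinj⟩
  rintro ⟨j, a⟩ ⟨j', a'⟩ hadj
  rw [matchingGraph, SimpleGraph.fromRel_adj] at hadj
  obtain ⟨hne, hjj⟩ := hadj
  have hj : j = j' := by
    rcases hjj with h | h
    · exact h
    · exact h.symm
  subst hj
  have ha : a ≠ a' := by
    intro hh
    exact hne (by rw [hh])
  obtain ⟨_, _, hne12, hcol⟩ := h1 j.val j.isLt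
  rcases fin2 a with rfl | rfl <;> rcases fin2 a' with rfl | rfl
  · exact absurd rfl ha
  · simp only [if_pos rfl, if_neg one_ne_zero]
    exact colorClass_adj c i _ _ hne12 hcol
  · simp only [if_pos rfl, if_neg one_ne_zero]
    refine (colorClass_adj c i _ _ hne12 hcol).symm
  · exact absurd rfl ha

lemma colorClass_adj_iff {N : ℕ} (c : Sym2 (Fin N) → Fin 3) (i : Fin 3) (u v : Fin N) :
    (colorClass c i).Adj u v ↔ u ≠ v ∧ (c s(u, v) = i ∨ c s(v, u) = i) :=
  SimpleGraph.fromRel_adj _ _ _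

lemma matchingGraph_adj_iff {k : ℕ} (u v : Fin k × Fin 2) :
    (matchingGraph k).Adj u v ↔ u ≠ v ∧ (u.1 = v.1 ∨ v.1 = u.1) :=
  SimpleGraph.fromRel_adj _ _ _

theorem ramsey_P3_nK2_mK2 (n m : ℕ) (hn : 3 ≤ n) (hnm : n ≤ m) :
    IsLeast {N | ramseyProp3 N (SimpleGraph.pathGraph 3) (matchingGraph n)
      (matchingGraph m)} (2 * m + n - 1) := by
  constructor
  · -- membership : the upper bound
    intro c
    have hcard : 2 * m + n - 1 ≤ (Finset.univ : Finset (Fin (2 * m + n - 1))).card := by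
      rw [Finset.card_univ, Fintype.card_fin]
    rcases key c m n Finset.univ (by omega) hnm hcard with hp | h1 | h2
    · exact Or.inl (p3in_contains hp)
    · exact Or.inr (Or.inl (matchIn_contains h1))
    · exact Or.inr (Or.inr (matchIn_contains h2))
  · -- lower bound
    intro N hN
    by_contra hlt
    push_neg at hlt
    have hN' : ramseyProp3 N (SimpleGraph.pathGraph 3) (matchingGraph n) (matchingGraph m) := hN
    set c : Sym2 (Fin N) → Fin 3 :=
      Sym2.lift ⟨fun u v => if u.val < n - 1 ∨ v.val < n - 1 then 1 else 2,
        by intro u v; simp [or_comm]⟩ with hc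
    have hcval : ∀ u v : Fin N,
        c s(u, v) = if u.val < n - 1 ∨ v.val < n - 1 then 1 else 2 := by
      intro u v; rw [hc]; rfl
    rcases hN' c with h0 | h1 | h2
    · -- no color-0 edges at all
      obtain ⟨F, _⟩ := h0
      have hadj : (pathGraph 3).Adj 0 1 := by
        rw [pathGraph_adj]; left; rfl
      have hFadj := F.map_adj hadj
      rw [colorClass_adj_iff] at hFadj
      obtain ⟨_, h | h⟩ := hFadj <;> rw [hcval] at h <;> split_ifs at h <;>
        exact absurd h (by decide)
    · -- a color-1 matching of size n needs n vertices of small value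
      obtain ⟨F, hFinj⟩ := h1
      have hadjm : ∀ j : Fin n, (matchingGraph n).Adj (j, 0) (j, 1) := by
        intro j
        rw [matchingGraph_adj_iff]
        refine ⟨?_, Or.inl rfl⟩
        intro hh
        rw [Prod.ext_iff] at hh
        have h2 : (0 : Fin 2) = 1 := hh.2
        exact absurd h2 (by decide)
      have hcol : ∀ j : Fin n, (F (j, 0)).val < n - 1 ∨ (F (j, 1)).val < n - 1 := by
        intro j
        have hFadj := F.map_adj (hadjm j)
        rw [colorClass_adj_iff] at hFadj
        obtain ⟨_, h | h⟩ := hFadj <;> rw [hcval] at h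
        · by_cases hcond : (F (j, 0)).val < n - 1 ∨ (F (j, 1)).val < n - 1
          · exact hcond
          · rw [if_neg hcond] at h; exact absurd h (by decide)
        · by_cases hcond : (F (j, 1)).val < n - 1 ∨ (F (j, 0)).val < n - 1
          · exact hcond.symm
          · rw [if_neg hcond] at h; exact absurd h (by decide)
      have hinj : Function.Injective (fun j : Fin n =>
          if hlt1 : (F (j, 0)).val < n - 1 then (⟨(F (j, 0)).val, hlt1⟩ : Fin (n - 1))
          else ⟨(F (j, 1)).val, (hcol j).resolve_left hlt1⟩) := by
        intro j j' hEq
        simp only at hEq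
        have hmain : ∀ (a a' : Fin 2), F (j, a) = F (j', a') → j = j' := by
          intro a a' hFF
          exact congrArg Prod.fst (hFinj hFF)
        by_cases hA : (F (j, 0)).val < n - 1 <;> by_cases hB : (F (j', 0)).val < n - 1
        · rw [dif_pos hA, dif_pos hB, Fin.mk.injEq] at hEq
          exact hmain 0 0 (Fin.ext hEq)
        · rw [dif_pos hA, dif_neg hB, Fin.mk.injEq] at hEq
          exact hmain 0 1 (Fin.ext hEq)
        · rw [dif_neg hA, dif_pos hB, Fin.mk.injEq] at hEq
          exact hmain 1 0 (Fin.ext hEq)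
        · rw [dif_neg hA, dif_neg hB, Fin.mk.injEq] at hEq
          exact hmain 1 1 (Fin.ext hEq)
      have hcard := Fintype.card_le_of_injective _ hinj
      simp only [Fintype.card_fin] at hcard
      omega
    · -- a color-2 matching of size m needs 2m vertices of big value
      obtain ⟨F, hFinj⟩ := h2
      have hadjm : ∀ j : Fin m, (matchingGraph m).Adj (j, 0) (j, 1) := by
        intro j
        rw [matchingGraph_adj_iff]
        refine ⟨?_, Or.inl rfl⟩
        intro hh
        rw [Prod.ext_iff] at hh
        have h2 : (0 : Fin 2) = 1 := hh.2
        exact absurd h2 (by decide)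
      have hge : ∀ p : Fin m × Fin 2, n - 1 ≤ (F p).val := by
        rintro ⟨j, a⟩
        have hFadj := F.map_adj (hadjm j)
        rw [colorClass_adj_iff] at hFadj
        have hboth : n - 1 ≤ (F (j, 0)).val ∧ n - 1 ≤ (F (j, 1)).val := by
          obtain ⟨_, h | h⟩ := hFadj <;> rw [hcval] at h
          · by_cases hcond : (F (j, 0)).val < n - 1 ∨ (F (j, 1)).val < n - 1
            · rw [if_pos hcond] at h; exact absurd h (by decide)
            · push_neg at hcond; omega
          · by_cases hcond : (F (j, 1)).val < n - 1 ∨ (F (j, 0)).val < n - 1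
            · rw [if_pos hcond] at h; exact absurd h (by decide)
            · push_neg at hcond; omega
        have fin2 : a = 0 ∨ a = 1 := by omega
        rcases fin2 with rfl | rfl
        · exact hboth.1
        · exact hboth.2
      have hinj : Function.Injective (fun p : Fin m × Fin 2 =>
          (⟨(F p).val - (n - 1), by
            have h1 := (F p).isLt
            have h2 := hge p
            omega⟩ : Fin (N - (n - 1)))) := by
        intro p q hEq
        rw [Fin.mk.injEq] at hEq
        have h1 := hge p
        have h2 := hge q
        have : (F p).val = (F q).val := by omega
        exact hFinj (Fin.ext this)
      have hcard := Fintype.card_le_of_injective _ hinj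
      simp only [Fintype.card_fin, Fintype.card_prod] at hcard
      omega
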